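/- Let L be Hermitian on ℂᴰ with eigenvalues λⱼ and minimum nonzero spectral gap γ > 0 among distinct eigenvalues, let ρ₀ = |ψ⟩⟨ψ| be a pure state with c_{jk} = cⱼc̄ₖ, Σⱼ|cⱼ|² = 1, and let P be an orthogonal projector. Define R_t = (i/t)Σ_{λⱼ≠λₖ} c_{jk}(e^{-i(λⱼ−λₖ)t}−1)/(λⱼ−λₖ)|λⱼ⟩⟨λₖ|. Then |Tr(R_t P)| ≤ (2/(γt))·√(Σⱼ(⟨λⱼ|P|λⱼ⟩ − ⟨λⱼ|P|λⱼ⟩²)). -/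

import Mathlib

open Complex in
/-- Bound on the transient term of the time-averaged pure state: with
`R_t = (i/t)Σ_{λⱼ≠λₖ} cⱼc̄ₖ (e^{-i(λⱼ−λₖ)t}−1)/(λⱼ−λₖ)|λⱼ⟩⟨λₖ|` and a Hermitian
projector `P` (expressed in the eigenbasis), the minimal nonzero gap `γ` gives
`|Tr(R_t P)| ≤ (2/(γt))·√(Σⱼ(Pⱼⱼ − Pⱼⱼ²))`. -/
theorem transient_trace_bound
    {ι : Type*} [Fintype ι] [DecidableEq ι]
    (lam : ι → ℝ) (γ t : ℝ) (hγ : 0 < γ) (ht : 0 < t)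
    (hgap : ∀ j k, lam j ≠ lam k → γ ≤ |lam j - lam k|)
    (c : ι → ℂ) (hc : ∑ j, ‖c j‖ ^ 2 = 1)
    (P : Matrix ι ι ℂ) (hP : P.IsHermitian) (hproj : P * P = P) :
    ‖Matrix.trace
        ((Matrix.of fun j k =>
          if lam j = lam k then 0
          else Complex.I / t * (c j * (starRingEnd ℂ) (c k)) *
            (Complex.exp (-Complex.I * ((lam j : ℂ) - lam k) * t) - 1) / ((lam j : ℂ) - lam k))
          * P)‖
      ≤ 2 / (γ * t) * Real.sqrt (∑ j, ((P j j).re - ((P j j).re) ^ 2)) := by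
  classical
  set f : ι × ι → ℂ := fun p =>
    (if lam p.1 = lam p.2 then 0
     else Complex.I / t * (c p.1 * (starRingEnd ℂ) (c p.2)) *
        (Complex.exp (-Complex.I * ((lam p.1 : ℂ) - lam p.2) * t) - 1) /
          ((lam p.1 : ℂ) - lam p.2)) * P p.2 p.1 with hf
  -- key row-sum identity
  have hrow : ∀ k, ∑ j, ‖P k j‖ ^ 2 = (P k k).re := by
    intro k
    have h1 : (P * P) k k = P k k := by rw [hproj]
    have h2 : ∑ j, P k j * P j k = P k k := by
      rw [← Matrix.mul_apply, h1]
    have h3 : ∑ j, ((‖P k j‖ ^ 2 : ℝ) : ℂ) = P k k := by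
      rw [← h2]
      refine Finset.sum_congr rfl fun j _ => ?_
      rw [← hP.apply j k]
      simp [Complex.mul_conj, Complex.normSq_eq_norm_sq, Complex.ofReal_pow]
    have := congrArg Complex.re h3
    simpa [Complex.re_sum, ← Complex.ofReal_pow] using this
  -- diagonal entries are real
  have hdiag : ∀ k, (P k k).im = 0 := by
    intro k
    have h := congrArg Complex.im (hP.apply k k)
    simpa [neg_eq_iff_add_eq_zero, eq_neg_iff_add_eq_zero] using h.symm
  set T : Finset (ι × ι) := Finset.univ.filter (fun p => lam p.1 ≠ lam p.2) with hT
  have htr : Matrix.trace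
        ((Matrix.of fun j k =>
          if lam j = lam k then 0
          else Complex.I / t * (c j * (starRingEnd ℂ) (c k)) *
            (Complex.exp (-Complex.I * ((lam j : ℂ) - lam k) * t) - 1) / ((lam j : ℂ) - lam k))
          * P) = ∑ p ∈ T, f p := by
    have h0 : Matrix.trace
        ((Matrix.of fun j k =>
          if lam j = lam k then 0
          else Complex.I / t * (c j * (starRingEnd ℂ) (c k)) *
            (Complex.exp (-Complex.I * ((lam j : ℂ) - lam k) * t) - 1) / ((lam j : ℂ) - lam k))
          * P) = ∑ p : ι × ι, f p := by
      simp only [Matrix.trace, Matrix.diag, Matrix.mul_apply, Matrix.of_apply,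
        Fintype.sum_prod_type, hf]
    rw [h0]
    refine (Finset.sum_subset (Finset.subset_univ T) (fun p _ hp => ?_)).symm
    have : lam p.1 = lam p.2 := by
      by_contra hne
      exact hp (by simp [hT, hne])
    simp [hf, this]
  have hterm : ∀ p ∈ T, ‖f p‖ ≤ 2 / (γ * t) * ((‖c p.1‖ * ‖c p.2‖) * ‖P p.2 p.1‖) := by
    intro p hp
    have hne : lam p.1 ≠ lam p.2 := by
      have := Finset.mem_filter.mp hp
      exact this.2
    have hdabs : ‖((lam p.1 : ℂ) - (lam p.2 : ℂ))‖ = |lam p.1 - lam p.2| := by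
      rw [← Complex.ofReal_sub, Complex.norm_real, Real.norm_eq_abs]
    have hdpos : 0 < |lam p.1 - lam p.2| := lt_of_lt_of_le hγ (hgap _ _ hne)
    have hexp : ‖Complex.exp (-Complex.I * ((lam p.1 : ℂ) - lam p.2) * t) - 1‖ ≤ 2 := by
      have h1 : ‖Complex.exp (-Complex.I * ((lam p.1 : ℂ) - lam p.2) * t)‖ = 1 := by
        rw [Complex.norm_exp]
        have : (-Complex.I * ((lam p.1 : ℂ) - lam p.2) * t).re = 0 := by
          simp [Complex.mul_re, Complex.mul_im]
        rw [this, Real.exp_zero]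
      calc ‖Complex.exp (-Complex.I * ((lam p.1 : ℂ) - lam p.2) * t) - 1‖
          ≤ ‖Complex.exp (-Complex.I * ((lam p.1 : ℂ) - lam p.2) * t)‖ + ‖(1:ℂ)‖ :=
            norm_sub_le _ _
        _ ≤ 2 := by rw [h1]; norm_num
    have hnorm : ‖f p‖ = 1 / t * (‖c p.1‖ * ‖c p.2‖) *
        ‖Complex.exp (-Complex.I * ((lam p.1 : ℂ) - lam p.2) * t) - 1‖ /
        |lam p.1 - lam p.2| * ‖P p.2 p.1‖ := by
      simp only [hf, if_neg hne]
      rw [norm_mul, norm_div, norm_mul, norm_mul, norm_div, hdabs]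
      simp [Complex.norm_real, abs_of_pos ht]
    rw [hnorm]
    have step1 : 1 / t * (‖c p.1‖ * ‖c p.2‖) *
        ‖Complex.exp (-Complex.I * ((lam p.1 : ℂ) - lam p.2) * t) - 1‖ /
        |lam p.1 - lam p.2| * ‖P p.2 p.1‖
        ≤ 1 / t * (‖c p.1‖ * ‖c p.2‖) * 2 / γ * ‖P p.2 p.1‖ := by
      gcongr
      exact hgap _ _ hne
    refine step1.trans (le_of_eq ?_)
    field_simp
  have hsum1 : ∑ p ∈ T, ‖f p‖
      ≤ 2 / (γ * t) * ∑ p ∈ T, (‖c p.1‖ * ‖c p.2‖) * ‖P p.2 p.1‖ := by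
    rw [Finset.mul_sum]
    exact Finset.sum_le_sum hterm
  set S : ℝ := ∑ p ∈ T, (‖c p.1‖ * ‖c p.2‖) * ‖P p.2 p.1‖ with hS
  set A : ℝ := ∑ p ∈ T, (‖c p.1‖ * ‖c p.2‖) ^ 2 with hA
  set B : ℝ := ∑ p ∈ T, ‖P p.2 p.1‖ ^ 2 with hB
  have hcs : S ≤ Real.sqrt A * Real.sqrt B := by
    have h := Finset.sum_mul_sq_le_sq_mul_sq T (fun p => ‖c p.1‖ * ‖c p.2‖)
      (fun p => ‖P p.2 p.1‖)
    have hSnn : 0 ≤ S := Finset.sum_nonneg fun p _ => by positivity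
    calc S = Real.sqrt (S ^ 2) := (Real.sqrt_sq hSnn).symm
      _ ≤ Real.sqrt (A * B) := Real.sqrt_le_sqrt h
      _ = Real.sqrt A * Real.sqrt B := Real.sqrt_mul (Finset.sum_nonneg fun p _ => by positivity) _
  have hA1 : A ≤ 1 := by
    have h1 : A ≤ ∑ p : ι × ι, (‖c p.1‖ * ‖c p.2‖) ^ 2 :=
      Finset.sum_le_sum_of_subset_of_nonneg (Finset.subset_univ T)
        (fun p _ _ => by positivity)
    have h2 : ∑ p : ι × ι, (‖c p.1‖ * ‖c p.2‖) ^ 2 = 1 := by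
      rw [Fintype.sum_prod_type]
      simp_rw [mul_pow, ← Finset.mul_sum, ← Finset.sum_mul, hc]
      norm_num
    linarith
  have hBle : B ≤ ∑ j, ((P j j).re - ((P j j).re) ^ 2) := by
    have hsub : T ⊆ Finset.univ.filter (fun p : ι × ι => p.1 ≠ p.2) := by
      intro p hp
      simp only [hT, Finset.mem_filter] at hp ⊢
      exact ⟨hp.1, fun h => hp.2 (by rw [h])⟩
    have h1 : B ≤ ∑ p ∈ Finset.univ.filter (fun p : ι × ι => p.1 ≠ p.2), ‖P p.2 p.1‖ ^ 2 :=
      Finset.sum_le_sum_of_subset_of_nonneg hsub (fun p _ _ => by positivity)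
    have hall : ∑ p : ι × ι, ‖P p.2 p.1‖ ^ 2 = ∑ j, (P j j).re := by
      rw [Fintype.sum_prod_type, Finset.sum_comm]
      exact Finset.sum_congr rfl fun k _ => hrow k
    have hdiagsum : ∑ p ∈ Finset.univ.filter (fun p : ι × ι => p.1 = p.2), ‖P p.2 p.1‖ ^ 2
        = ∑ j, ((P j j).re) ^ 2 := by
      rw [Finset.sum_filter, Fintype.sum_prod_type]
      refine Finset.sum_congr rfl fun i _ => ?_
      have hstep : (∑ y : ι, if i = y then ‖P y i‖ ^ 2 else 0) = ‖P i i‖ ^ 2 := by simp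
      have hnorm : ‖P i i‖ ^ 2 = (P i i).re ^ 2 + (P i i).im ^ 2 := by
        rw [Complex.sq_norm, Complex.normSq_apply]
        ring
      calc (∑ y : ι, if (i, y).1 = (i, y).2 then ‖P (i, y).2 (i, y).1‖ ^ 2 else 0)
          = ∑ y : ι, if i = y then ‖P y i‖ ^ 2 else 0 := rfl
        _ = ‖P i i‖ ^ 2 := hstep
        _ = (P i i).re ^ 2 := by rw [hnorm, hdiag i]; ring
    have hsplit : ∑ p ∈ Finset.univ.filter (fun p : ι × ι => p.1 = p.2), ‖P p.2 p.1‖ ^ 2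
        + ∑ p ∈ Finset.univ.filter (fun p : ι × ι => p.1 ≠ p.2), ‖P p.2 p.1‖ ^ 2
        = ∑ p : ι × ι, ‖P p.2 p.1‖ ^ 2 :=
      Finset.sum_filter_add_sum_filter_not _ _ _
    have h2 : ∑ p ∈ Finset.univ.filter (fun p : ι × ι => p.1 ≠ p.2), ‖P p.2 p.1‖ ^ 2
        = ∑ j, ((P j j).re - ((P j j).re) ^ 2) := by
      rw [Finset.sum_sub_distrib]
      rw [← hall, ← hdiagsum]
      linarith
    linarith
  rw [htr]
  calc ‖∑ p ∈ T, f p‖ ≤ ∑ p ∈ T, ‖f p‖ := norm_sum_le _ _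
    _ ≤ 2 / (γ * t) * S := hsum1
    _ ≤ 2 / (γ * t) * (Real.sqrt A * Real.sqrt B) := by
        have : (0:ℝ) ≤ 2 / (γ * t) := by positivity
        exact mul_le_mul_of_nonneg_left hcs this
    _ ≤ 2 / (γ * t) * (1 * Real.sqrt (∑ j, ((P j j).re - ((P j j).re) ^ 2))) := by
        have h1 : Real.sqrt A ≤ 1 := by
          calc Real.sqrt A ≤ Real.sqrt 1 := Real.sqrt_le_sqrt hA1
            _ = 1 := Real.sqrt_one
        have h2 : Real.sqrt B ≤ Real.sqrt (∑ j, ((P j j).re - ((P j j).re) ^ 2)) :=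
          Real.sqrt_le_sqrt hBle
        have hb : (0:ℝ) ≤ Real.sqrt B := Real.sqrt_nonneg _
        have : Real.sqrt A * Real.sqrt B ≤ 1 * Real.sqrt (∑ j, ((P j j).re - ((P j j).re) ^ 2)) :=
          mul_le_mul h1 h2 hb zero_le_one
        have hpos : (0:ℝ) ≤ 2 / (γ * t) := by positivity
        exact mul_le_mul_of_nonneg_left this hpos
    _ = 2 / (γ * t) * Real.sqrt (∑ j, ((P j j).re - ((P j j).re) ^ 2)) := by ring
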